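/- Let β, r, θ, c > 0 with β > r, let û₁ be the smallest zero of f(u) = β c u³ - β u + 2r in (0,1), and let (u₋, 1-u₋) be a positive fixed point of V₂ with 0 < u₋ < û₁ (so θ = Ψ₂(u₋) and f(u₋) > 0). Set q(u₋) = 1 - u₋ + u₋(1-u₋)(β - 2θ u₋/(1 + c u₋²)²), and let λ₁, λ₂ be the complex eigenvalues of the Jacobian matrix of V₂ at (u₋, 1-u₋). Then: if q(u₋) < 1 both eigenvalues satisfy |λᵢ| < 1 (attractive); if q(u₋) > 1 both satisfy |λᵢ| > 1 (repelling); and if q(u₋) = 1 then λ₁, λ₂ are a complex-conjugate pair with |λ₁| = |λ₂| = 1 (nonhyperbolic). -/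

import Mathlib

/-- `Ψ₂(u) = (βu - r)(1 + cu²)/u²`. -/
noncomputable def Psi2 (β r c u : ℝ) : ℝ := (β * u - r) * (1 + c * u ^ 2) / u ^ 2

/-- The cubic `f(u) = βcu³ - βu + 2r`. -/
noncomputable def fcub (β r c u : ℝ) : ℝ := β * c * u ^ 3 - β * u + 2 * r

/-- The Jacobian matrix of `V₂(u,v) = (u(2-u) - uv, βuv + (1-r)v - θu²v/(1+cu²))`
at the point `(u,v)`. -/
noncomputable def J2 (β r θ c : ℝ) (u v : ℝ) : Matrix (Fin 2) (Fin 2) ℝ :=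
  !![2 - 2 * u - v, -u;
     β * v - 2 * θ * u * v / (1 + c * u ^ 2) ^ 2,
     β * u + 1 - r - θ * u ^ 2 / (1 + c * u ^ 2)]

lemma aeval_charpoly_two (M : Matrix (Fin 2) (Fin 2) ℝ) (l : ℂ) :
    Polynomial.aeval l M.charpoly = l ^ 2 - (M.trace : ℂ) * l + (M.det : ℂ) := by
  rw [Matrix.charpoly, Matrix.det_fin_two, Matrix.charmatrix_apply_eq, Matrix.charmatrix_apply_eq,
    Matrix.charmatrix_apply_ne _ _ _ (by decide), Matrix.charmatrix_apply_ne _ _ _ (by decide),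
    Matrix.trace_fin_two, Matrix.det_fin_two]
  simp only [map_sub, map_mul, map_neg, Polynomial.aeval_X, Polynomial.aeval_C,
    Complex.coe_algebraMap]
  push_cast
  ring

lemma aux_real_lt (um q x : ℝ) (h0 : 0 < um) (h1 : um < 1) (hq1 : 1 - um < q)
    (hql : q < 1) (hx : x ^ 2 - (2 - um) * x + q = 0) : x ^ 2 < 1 := by
  have hxlt : x < 1 := by nlinarith [sq_nonneg (x - 1)]
  have hxgt : -1 < x := by nlinarith [sq_nonneg (x + 1)]
  nlinarith

lemma aux_noreal (um q x : ℝ) (h0 : 0 < um) (h1 : um < 1) (hql : 1 < q)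
    (hx : x ^ 2 - (2 - um) * x + q = 0) : False := by
  nlinarith [sq_nonneg (2 * x - (2 - um))]

set_option maxHeartbeats 2000000 in
/-- Stability classification of the positive fixed point `E₋ = (u₋, 1-u₋)` of `V₂`
(with `u₋` below the smallest zero `û₁` of `f` in `(0,1)`): with
`q(u₋) = 1 - u₋ + u₋(1-u₋)(β - 2θu₋/(1+cu₋²)²)`, if `q(u₋) < 1` the eigenvalues of
the Jacobian at `E₋` have modulus `< 1` (attractive), if `q(u₋) > 1` they have
modulus `> 1` (repelling), and if `q(u₋) = 1` they form a complex-conjugate pair of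
modulus `1` (nonhyperbolic). -/
theorem stability_Eminus_V2 (β r θ c u1 um : ℝ)
    (hβ : 0 < β) (hr : 0 < r) (hθ : 0 < θ) (hc : 0 < c) (hβr : r < β)
    (hu1 : u1 ∈ Set.Ioo (0 : ℝ) 1) (hz1 : fcub β r c u1 = 0)
    (hsmall : ∀ u ∈ Set.Ioo (0 : ℝ) 1, fcub β r c u = 0 → u1 ≤ u)
    (hum0 : 0 < um) (hum1 : um < u1)
    (hfix : θ = Psi2 β r c um) (hfpos : 0 < fcub β r c um)
    (q : ℝ) (hq : q = 1 - um + um * (1 - um) * (β - 2 * θ * um / (1 + c * um ^ 2) ^ 2)) :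
    (q < 1 → ∀ l : ℂ,
        Polynomial.aeval l (J2 β r θ c um (1 - um)).charpoly = 0 → ‖l‖ < 1) ∧
    (1 < q → ∀ l : ℂ,
        Polynomial.aeval l (J2 β r θ c um (1 - um)).charpoly = 0 → 1 < ‖l‖) ∧
    (q = 1 → ∃ μ : ℂ, μ.im ≠ 0 ∧ ‖μ‖ = 1 ∧
        ∀ l : ℂ, Polynomial.aeval l (J2 β r θ c um (1 - um)).charpoly = 0 ↔
          (l = μ ∨ l = (starRingEnd ℂ) μ)) := by
  have hum1' : um < 1 := hum1.trans hu1.2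
  have hden : (0:ℝ) < 1 + c * um ^ 2 := by positivity
  have hden' : (1 + c * um ^ 2 : ℝ) ≠ 0 := ne_of_gt hden
  have humne : um ≠ 0 := ne_of_gt hum0
  -- trace
  have hT : (J2 β r θ c um (1 - um)).trace = 2 - um := by
    simp only [J2, Matrix.trace_fin_two_of, hfix, Psi2]
    field_simp
    ring
  -- determinant
  have hD : (J2 β r θ c um (1 - um)).det = q := by
    simp only [J2, Matrix.det_fin_two_of, hfix, Psi2, hq]
    field_simp
    ring
  -- key inequality : 1 - um < q
  have hq1 : 1 - um < q := by
    have hkey : β - 2 * θ * um / (1 + c * um ^ 2) ^ 2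
        = fcub β r c um / (um * (1 + c * um ^ 2)) := by
      rw [hfix, Psi2, fcub]
      field_simp
      ring
    rw [hq, hkey]
    have : 0 < um * (1 - um) * (fcub β r c um / (um * (1 + c * um ^ 2))) := by
      apply mul_pos (mul_pos hum0 (by linarith))
      positivity
    linarith
  have hq0 : 0 < q := by linarith
  -- root characterization
  have hroot : ∀ l : ℂ, Polynomial.aeval l (J2 β r θ c um (1 - um)).charpoly = 0 ↔
      l ^ 2 - ((2 - um : ℝ) : ℂ) * l + (q : ℂ) = 0 := by
    intro l
    rw [aeval_charpoly_two, hT, hD]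
  -- real/imaginary part equations for a root
  have hparts : ∀ l : ℂ, l ^ 2 - ((2 - um : ℝ) : ℂ) * l + (q : ℂ) = 0 →
      (l.re ^ 2 - l.im ^ 2 - (2 - um) * l.re + q = 0 ∧
       l.im * (2 * l.re - (2 - um)) = 0) := by
    intro l hl
    have h1 := congrArg Complex.re hl
    have h2 := congrArg Complex.im hl
    simp only [Complex.add_re, Complex.add_im, Complex.sub_re, Complex.sub_im, Complex.mul_re,
      Complex.mul_im, Complex.ofReal_re, Complex.ofReal_im, Complex.zero_re, Complex.zero_im,
      pow_two, Complex.mul_re, Complex.mul_im] at h1 h2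
    constructor
    · nlinarith [h1]
    · nlinarith [h2]
  refine ⟨?_, ?_, ?_⟩
  · -- q < 1 : attractive
    intro hql l hl
    rw [hroot] at hl
    obtain ⟨h1, h2⟩ := hparts l hl
    set x := l.re
    set y := l.im
    have habs : ‖l‖ ^ 2 = x ^ 2 + y ^ 2 := by
      rw [Complex.sq_norm, Complex.normSq_apply]; ring
    have hlt : x ^ 2 + y ^ 2 < 1 := by
      rcases mul_eq_zero.mp h2 with hy | hx
      · -- real root
        rw [hy] at h1 ⊢
        have := aux_real_lt um q x hum0 hum1' hq1 hql (by linarith)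
        nlinarith
      · -- complex pair: |l|² = q
        have hx' : x = (2 - um) / 2 := by linarith
        nlinarith [hx', h1]
    nlinarith [norm_nonneg l, habs]
  · -- q > 1 : repelling
    intro hql l hl
    rw [hroot] at hl
    obtain ⟨h1, h2⟩ := hparts l hl
    set x := l.re
    set y := l.im
    have habs : ‖l‖ ^ 2 = x ^ 2 + y ^ 2 := by
      rw [Complex.sq_norm, Complex.normSq_apply]; ring
    have hgt : 1 < x ^ 2 + y ^ 2 := by
      rcases mul_eq_zero.mp h2 with hy | hx
      · exfalso
        rw [hy] at h1
        exact aux_noreal um q x hum0 hum1' hql (by linarith)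
      · have hx' : x = (2 - um) / 2 := by linarith
        nlinarith [hx', h1]
    nlinarith [norm_nonneg l, habs]
  · -- q = 1 : nonhyperbolic
    intro hq1'
    set s : ℝ := Real.sqrt (1 - (2 - um) ^ 2 / 4) with hs
    have hspos : 0 < 1 - (2 - um) ^ 2 / 4 := by nlinarith
    have hs2 : s ^ 2 = 1 - (2 - um) ^ 2 / 4 := Real.sq_sqrt (le_of_lt hspos)
    have hsne : s ≠ 0 := by
      intro h
      rw [h] at hs2
      nlinarith
    refine ⟨⟨(2 - um) / 2, s⟩, hsne, ?_, ?_⟩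
    · have : ‖(⟨(2 - um) / 2, s⟩ : ℂ)‖ ^ 2 = 1 := by
        rw [Complex.sq_norm, Complex.normSq_apply]
        simp only
        nlinarith [hs2]
      nlinarith [norm_nonneg (⟨(2 - um) / 2, s⟩ : ℂ), this]
    · intro l
      rw [hroot, hq1']
      have hfac : l ^ 2 - ((2 - um : ℝ) : ℂ) * l + ((1 : ℝ) : ℂ)
          = (l - ⟨(2 - um) / 2, s⟩) * (l - (starRingEnd ℂ) ⟨(2 - um) / 2, s⟩) := by
        have hsum : (⟨(2 - um) / 2, s⟩ : ℂ) + (starRingEnd ℂ) ⟨(2 - um) / 2, s⟩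
            = ((2 - um : ℝ) : ℂ) := by
          rw [Complex.add_conj]
          simp only
          push_cast
          ring_nf
        have hprod : (⟨(2 - um) / 2, s⟩ : ℂ) * (starRingEnd ℂ) ⟨(2 - um) / 2, s⟩
            = ((1 : ℝ) : ℂ) := by
          rw [Complex.mul_conj]
          norm_cast
          rw [Complex.normSq_apply]
          simp only
          nlinarith [hs2]
        have : (l - ⟨(2 - um) / 2, s⟩) * (l - (starRingEnd ℂ) ⟨(2 - um) / 2, s⟩)
            = l ^ 2 - ((⟨(2 - um) / 2, s⟩ : ℂ) + (starRingEnd ℂ) ⟨(2 - um) / 2, s⟩) * l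
              + (⟨(2 - um) / 2, s⟩ : ℂ) * (starRingEnd ℂ) ⟨(2 - um) / 2, s⟩ := by ring
        rw [this, hsum, hprod]
      rw [hfac, mul_eq_zero, sub_eq_zero, sub_eq_zero]
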